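/- Let α₁, ..., αₙ be distinct complex numbers, Y ∈ ℂ, μ ∈ ℂ, and set β_j = X - α_j Y for some X ∈ ℂ, with ∏_j β_j = μ. Let i be an index with |β_i| = min_j |β_j|. If |Y| > max_{j≠i} 2|μ|^(1/n)/|α_j - α_i|, then for every j ≠ i one has |β_j| ≥ (|α_j - α_i|/2)·|Y|. -/

import Mathlib

theorem stmt_3 (n : ℕ) (hn : 2 ≤ n) (α : Fin n → ℂ) (hα : Function.Injective α)
    (X Y μ : ℂ) (β : Fin n → ℂ) (hβ : ∀ j, β j = X - α j * Y)
    (hprod : ∏ j, β j = μ) (i : Fin n)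
    (hmin : ∀ j, ‖β i‖ ≤ ‖β j‖)
    (hY : ∀ j, j ≠ i →
      ‖Y‖ > 2 * ‖μ‖ ^ ((1 : ℝ) / n) / ‖α j - α i‖) :
    ∀ j, j ≠ i → ‖β j‖ ≥ (‖α j - α i‖ / 2) * ‖Y‖ := by
  intro j hj
  have h1 : β j - β i = (α i - α j) * Y := by rw [hβ, hβ]; ring
  have key : ‖α j - α i‖ * ‖Y‖ ≤ 2 * ‖β j‖ := by
    calc ‖α j - α i‖ * ‖Y‖
        = ‖(α i - α j) * Y‖ := by
          rw [norm_mul]; congr 1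
          rw [← norm_neg]; ring_nf
      _ = ‖β j - β i‖ := by rw [h1]
      _ ≤ ‖β j‖ + ‖β i‖ := norm_sub_le _ _
      _ ≤ 2 * ‖β j‖ := by linarith [hmin j]
  linarith
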